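/- arXiv:1903.01459 — 2 statements merged into one kernel-verified Lean document; each statement's English description precedes it below -/
import Mathlib

section
/- Uniform boundedness of the local-linear scaling constant (fact (a) in the proof of Proposition S.4): Let K : ℝ → ℝ be nonnegative, bounded and Lipschitz continuous, with K(−u) = K(u) for all u, K(u) = 0 for |u| > 1, and ∫_ℝ K(u) du = 1. For x ∈ [0,1] and h ∈ (0, 1/2], define κ_ℓ(x,h) = ∫_{−x/h}^{(1−x)/h} u^ℓ K(u) du for ℓ = 0,1,2, ρ(x,h) = ∫_{−x/h}^{(1−x)/h} K(u)² (κ₂(x,h) − κ₁(x,h)·u)² du, and s(x,h) = ρ(x,h) / (κ₀(x,h)·κ₂(x,h) − κ₁(x,h)²)². Then there exist constants 0 < c_s ≤ C_s < ∞, depending only on K, such that for all x ∈ [0,1] and all h ∈ (0, 1/2], κ₀(x,h)·κ₂(x,h) − κ₁(x,h)² > 0 and c_s ≤ s(x,h) ≤ C_s. -/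
open MeasureTheory
open intervalIntegral

/-- The truncated kernel moments `κ_ℓ(x,h) = ∫_{−x/h}^{(1−x)/h} u^ℓ K(u) du`. -/
noncomputable def kmom (K : ℝ → ℝ) (ℓ : ℕ) (x h : ℝ) : ℝ :=
  ∫ u in (-(x / h))..((1 - x) / h), u ^ ℓ * K u

/-- `ρ(x,h) = ∫_{−x/h}^{(1−x)/h} K(u)² (κ₂(x,h) − κ₁(x,h)·u)² du`. -/
noncomputable def krho (K : ℝ → ℝ) (x h : ℝ) : ℝ :=
  ∫ u in (-(x / h))..((1 - x) / h),
    K u ^ 2 * (kmom K 2 x h - kmom K 1 x h * u) ^ 2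

/-- The local-linear scaling constant
`s(x,h) = ρ(x,h) / (κ₀(x,h)·κ₂(x,h) − κ₁(x,h)²)²`. -/
noncomputable def kscale (K : ℝ → ℝ) (x h : ℝ) : ℝ :=
  krho K x h / (kmom K 0 x h * kmom K 2 x h - kmom K 1 x h ^ 2) ^ 2

lemma cube_lb (t p q : ℝ) (hpq : p ≤ q) :
    (q - p) ^ 3 / 12 ≤ ∫ u in p..q, (u - t) ^ 2 := by
  have hcomp : (∫ u in p..q, (u - t) ^ 2) = ∫ u in p - t..q - t, u ^ 2 :=
    intervalIntegral.integral_comp_sub_right (fun u => u ^ 2) t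
  rw [hcomp, integral_pow]
  nlinarith [sq_nonneg ((q - t) + (p - t)), sq_nonneg ((q - t) - (p - t)), sq_nonneg (q-p)]

lemma linsq_lb (α β p q c₂ : ℝ) (h1 : -1 ≤ p) (hpq : p ≤ q) (hq : q ≤ 1)
    (hc : 0 < c₂) (hα : c₂ ≤ α) :
    c₂ ^ 2 * (q - p) ^ 3 / 48 ≤ ∫ u in p..q, (α - β * u) ^ 2 := by
  have hcont : Continuous fun u : ℝ => (α - β * u) ^ 2 := by continuity
  rcases le_or_gt |β| (c₂ / 2) with hβ | hβ
  · have hpt : ∀ u ∈ Set.Icc p q, (c₂ / 2) ^ 2 ≤ (α - β * u) ^ 2 := by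
      intro u hu
      have hu1 : |u| ≤ 1 := abs_le.2 ⟨le_trans h1 hu.1, le_trans hu.2 hq⟩
      have : |β * u| ≤ c₂ / 2 := by
        rw [abs_mul]
        calc |β| * |u| ≤ (c₂ / 2) * 1 := by
              apply mul_le_mul hβ hu1 (abs_nonneg u) (by linarith)
          _ = c₂ / 2 := by ring
      have h2 : β * u ≤ c₂ / 2 := le_trans (le_abs_self _) this
      have h3 : c₂ / 2 ≤ α - β * u := by linarith
      exact pow_le_pow_left₀ (by linarith) h3 2
    have := intervalIntegral.integral_mono_on (μ := volume) hpq
      (_root_.intervalIntegrable_const (c := (c₂/2)^2)) (hcont.intervalIntegrable p q) hpt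
    rw [intervalIntegral.integral_const] at this
    simp only [smul_eq_mul] at this
    have hL0 : (0:ℝ) ≤ q - p := by linarith
    have hL2 : q - p ≤ 2 := by linarith
    have key : c₂ ^ 2 * (q - p) ^ 3 ≤ 48 * ((q - p) * (c₂ / 2) ^ 2) := by
      nlinarith [mul_nonneg (mul_nonneg (sq_nonneg c₂) hL0) (by nlinarith : (0:ℝ) ≤ 12 - (q-p)^2)]
    linarith
  · have hβ0 : β ≠ 0 := by
      intro h; rw [h] at hβ; simp at hβ; linarith
    have key : (∫ u in p..q, (α - β * u) ^ 2) = β ^ 2 * ∫ u in p..q, (u - α / β) ^ 2 := by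
      rw [← intervalIntegral.integral_const_mul]
      congr 1; funext u; field_simp; ring
    rw [key]
    have h12 : (q - p) ^ 3 / 12 ≤ ∫ u in p..q, (u - α / β) ^ 2 := cube_lb _ _ _ hpq
    have hb2 : c₂ ^ 2 / 4 ≤ β ^ 2 := by
      have : c₂ / 2 ≤ |β| := hβ.le
      nlinarith [abs_nonneg β, sq_abs β]
    have hL0 : (0:ℝ) ≤ (q - p) ^ 3 / 12 := div_nonneg (pow_nonneg (by linarith) 3) (by norm_num)
    have := mul_le_mul hb2 h12 hL0 (sq_nonneg β)
    linarith

set_option maxHeartbeats 1000000 in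
/-- **Uniform boundedness of the local-linear scaling constant (fact (a) in the proof of
Proposition S.4).** For a nonnegative, bounded, Lipschitz, symmetric kernel `K` with
support in `[−1,1]` and `∫ K = 1`, there exist constants `0 < c_s ≤ C_s < ∞`, depending
only on `K`, such that for all `x ∈ [0,1]` and all bandwidths `0 < h ≤ 1/2` the
denominator `κ₀κ₂ − κ₁²` is positive and `c_s ≤ s(x,h) ≤ C_s`. -/
theorem scaling_constant_uniformly_bounded (K : ℝ → ℝ)
    (hnonneg : ∀ u, 0 ≤ K u)
    (hbdd : ∃ B : ℝ, ∀ u, K u ≤ B)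
    (hlip : ∃ L : NNReal, LipschitzWith L K)
    (hsymm : ∀ u, K (-u) = K u)
    (hsupp : ∀ u : ℝ, 1 < |u| → K u = 0)
    (hint : (∫ u, K u) = 1) :
    ∃ cs Cs : ℝ, 0 < cs ∧ cs ≤ Cs ∧
      ∀ x ∈ Set.Icc (0 : ℝ) 1, ∀ h : ℝ, 0 < h → h ≤ 1 / 2 →
        0 < kmom K 0 x h * kmom K 2 x h - kmom K 1 x h ^ 2 ∧
          cs ≤ kscale K x h ∧ kscale K x h ≤ Cs := by
  obtain ⟨B, hB⟩ := hbdd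
  obtain ⟨Lc, hlipK⟩ := hlip
  have Kcont : Continuous K := hlipK.continuous
  have Kcs : HasCompactSupport K := by
    apply HasCompactSupport.intro (isCompact_Icc (a := (-1:ℝ)) (b := 1))
    intro u hu
    apply hsupp
    by_contra hle
    push_neg at hle
    exact hu (Set.mem_Icc.2 (abs_le.1 hle))
  have Kint : Integrable K := Kcont.integrable_of_hasCompactSupport Kcs
  -- find a point where K is positive
  have hexist : ∃ u₀ : ℝ, 0 < u₀ ∧ 0 < K u₀ := by
    by_contra hcon
    push_neg at hcon
    have hpos : ∀ u : ℝ, 0 < u → K u = 0 := fun u hu => le_antisymm (hcon u hu) (hnonneg u)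
    have hz : ∀ u : ℝ, K u = 0 := by
      intro u
      rcases lt_trichotomy u 0 with h' | h' | h'
      · rw [← hsymm u] at *
        have : K (-u) = 0 := hpos (-u) (by linarith)
        rw [hsymm u] at this
        rw [hsymm u]; exact this
      · subst h'
        have h1 : Filter.Tendsto K (nhdsWithin 0 (Set.Ioi 0)) (nhds (K 0)) :=
          (Kcont.tendsto 0).mono_left nhdsWithin_le_nhds
        have h2 : Filter.Tendsto K (nhdsWithin 0 (Set.Ioi (0:ℝ))) (nhds 0) := by
          apply Filter.Tendsto.congr' _ tendsto_const_nhds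
          filter_upwards [self_mem_nhdsWithin] with t ht
          exact (hpos t ht).symm
        exact tendsto_nhds_unique h1 h2
      · exact hpos u h'
    have hzero : (∫ u, K u) = 0 := by simp [hz]
    rw [hint] at hzero
    exact one_ne_zero hzero
  obtain ⟨u₀, hu₀, hK₀⟩ := hexist
  have hu₀1 : u₀ ≤ 1 := by
    by_contra hgt
    push_neg at hgt
    have := hsupp u₀ (by rwa [abs_of_pos hu₀])
    linarith
  set Λ : ℝ := (Lc : ℝ) + 1 with hΛdef
  have hΛ : 0 < Λ := by positivity
  set m : ℝ := K u₀ / 2 with hmdef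
  have hm : 0 < m := half_pos hK₀
  set r : ℝ := min (u₀ / 2) (m / Λ) with hrdef
  have hr : 0 < r := lt_min (by linarith) (div_pos hm hΛ)
  set p : ℝ := u₀ - r with hpdef
  have hru : r ≤ u₀ / 2 := min_le_left _ _
  have hp : 0 < p := by simp only [hpdef]; linarith
  have hr1 : r ≤ 1 / 2 := by linarith
  -- K ≥ m whenever p ≤ |u| ≤ u₀
  have hKm : ∀ u : ℝ, p ≤ |u| → |u| ≤ u₀ → m ≤ K u := by
    intro u h1 h2
    have habs : K |u| = K u := by
      rcases le_or_gt 0 u with h | h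
      · rw [abs_of_nonneg h]
      · rw [abs_of_nonpos h.le]; exact hsymm u
    have hdist : |(|u| - u₀)| ≤ r := abs_le.2 ⟨by simp only [hpdef] at h1; linarith, by linarith⟩
    have hlb := hlipK.dist_le_mul |u| u₀
    rw [Real.dist_eq, Real.dist_eq] at hlb
    have hΛle : |K |u| - K u₀| ≤ Λ * r := by
      calc |K |u| - K u₀| ≤ (Lc : ℝ) * |(|u| - u₀)| := hlb
        _ ≤ Λ * r := by
            apply mul_le_mul (by simp only [hΛdef]; linarith) hdist (abs_nonneg _) hΛ.le
    have hΛr : Λ * r ≤ m := by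
      have hrm : r ≤ m / Λ := min_le_right _ _
      calc Λ * r ≤ Λ * (m / Λ) := mul_le_mul_of_nonneg_left hrm hΛ.le
        _ = m := by field_simp
    have h9 := (abs_le.1 hΛle).1
    rw [habs] at h9
    have hKu0 : m = K u₀ / 2 := hmdef
    linarith
  have hBpos : 0 < B := lt_of_lt_of_le hK₀ (hB u₀)
  -- the constants
  refine ⟨min (m ^ 2 * ((m * p ^ 2 * r) ^ 2 * r ^ 3 / 48)) (4 * B / (m ^ 2 * r ^ 4 / 12) ^ 2),
    4 * B / (m ^ 2 * r ^ 4 / 12) ^ 2, lt_min (by positivity) (by positivity), min_le_right _ _, ?_⟩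
  intro x hx h hh0 hh2
  have hab : -(x / h) ≤ (1 - x) / h := by
    have h1 : 0 ≤ x / h := div_nonneg hx.1 hh0.le
    have h2 : 0 ≤ (1 - x) / h := div_nonneg (by linarith [hx.2]) hh0.le
    linarith
  have hsum : 2 ≤ x / h + (1 - x) / h := by
    rw [← add_div, le_div_iff₀ hh0]
    linarith
  -- continuity facts
  have cont0 : Continuous fun u : ℝ => u ^ 0 * K u := (continuous_pow 0).mul Kcont
  have cont1 : Continuous fun u : ℝ => u ^ 1 * K u := (continuous_pow 1).mul Kcont
  have cont2 : Continuous fun u : ℝ => u ^ 2 * K u := (continuous_pow 2).mul Kcont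
  have e0 : kmom K 0 x h = ∫ u in (-(x / h))..((1 - x) / h), K u := by
    simp [kmom]
  -- basic moment bounds
  have hk0_nonneg : 0 ≤ kmom K 0 x h := by
    rw [e0]
    exact intervalIntegral.integral_nonneg hab fun u _ => hnonneg u
  have hk0_le1 : kmom K 0 x h ≤ 1 := by
    rw [e0, intervalIntegral.integral_of_le hab]
    calc (∫ u in Set.Ioc (-(x / h)) ((1 - x) / h), K u)
        ≤ ∫ u, K u := setIntegral_le_integral Kint (Filter.Eventually.of_forall hnonneg)
      _ = 1 := hint
  have hpt2 : ∀ u : ℝ, u ^ 2 * K u ≤ u ^ 0 * K u := by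
    intro u
    rcases le_or_gt |u| 1 with hu | hu
    · have h1 : u ^ 2 ≤ 1 := by
        rw [← sq_abs]
        exact pow_le_one₀ (abs_nonneg u) hu
      simpa using mul_le_mul_of_nonneg_right h1 (hnonneg u)
    · simp [hsupp u hu]
  have hk2_le_k0 : kmom K 2 x h ≤ kmom K 0 x h :=
    intervalIntegral.integral_mono_on hab (cont2.intervalIntegrable _ _)
      (cont0.intervalIntegrable _ _) fun u _ => hpt2 u
  have hk2_nonneg : 0 ≤ kmom K 2 x h :=
    intervalIntegral.integral_nonneg hab fun u _ =>
      mul_nonneg (sq_nonneg u) (hnonneg u)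
  have hpt1u : ∀ u : ℝ, u ^ 1 * K u ≤ u ^ 0 * K u := by
    intro u
    rcases le_or_gt |u| 1 with hu | hu
    · have h1 : u ≤ 1 := le_trans (le_abs_self u) hu
      simpa using mul_le_mul_of_nonneg_right h1 (hnonneg u)
    · simp [hsupp u hu]
  have hpt1l : ∀ u : ℝ, -(u ^ 0 * K u) ≤ u ^ 1 * K u := by
    intro u
    rcases le_or_gt |u| 1 with hu | hu
    · have h1 : -1 ≤ u := (abs_le.1 hu).1
      have := mul_le_mul_of_nonneg_right h1 (hnonneg u)
      simpa using this
    · simp [hsupp u hu]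
  have hk1_ub : kmom K 1 x h ≤ kmom K 0 x h :=
    intervalIntegral.integral_mono_on hab (cont1.intervalIntegrable _ _)
      (cont0.intervalIntegrable _ _) fun u _ => hpt1u u
  have hk1_lb : -(kmom K 0 x h) ≤ kmom K 1 x h := by
    have := intervalIntegral.integral_mono_on (μ := volume) hab
      ((cont0.neg).intervalIntegrable _ _) (cont1.intervalIntegrable _ _)
      (fun u _ => hpt1l u)
    simp only [Pi.neg_apply, intervalIntegral.integral_neg] at this
    exact this
  -- the good subinterval
  obtain ⟨ps, qs, hps1, hps2, hps3, hlen, hpsm1, hqs1, hmem⟩ :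
      ∃ ps qs : ℝ, -(x / h) ≤ ps ∧ ps ≤ qs ∧ qs ≤ (1 - x) / h ∧ qs - ps = r ∧
        -1 ≤ ps ∧ qs ≤ 1 ∧ ∀ u ∈ Set.Icc ps qs, m ≤ K u ∧ p ^ 2 ≤ u ^ 2 := by
    rcases le_or_gt 1 ((1 - x) / h) with hcase | hcase
    · refine ⟨p, u₀, by nlinarith [div_nonneg hx.1 hh0.le], by simp only [hpdef]; linarith,
        by linarith, by simp only [hpdef]; ring, by linarith, hu₀1, ?_⟩
      intro u hu
      have hup : p ≤ u := hu.1
      have huq : u ≤ u₀ := hu.2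
      have habs : |u| = u := abs_of_pos (lt_of_lt_of_le hp hup)
      constructor
      · exact hKm u (by rwa [habs]) (by rwa [habs])
      · exact pow_le_pow_left₀ hp.le hup 2
    · have h1A : 1 ≤ x / h := by linarith
      refine ⟨-u₀, -p, by linarith, by simp only [hpdef]; linarith, ?_, by simp only [hpdef]; ring,
        by linarith, ?_, ?_⟩
      · have : 0 ≤ (1 - x) / h := div_nonneg (by linarith [hx.2]) hh0.le
        linarith
      · linarith
      · intro u hu
        have hu1 : -u₀ ≤ u := hu.1
        have hu2 : u ≤ -p := hu.2
        have habs : |u| = -u := abs_of_neg (by linarith)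
        constructor
        · exact hKm u (by rw [habs]; linarith) (by rw [habs]; linarith)
        · have h9 : p ^ 2 ≤ (-u) ^ 2 := pow_le_pow_left₀ hp.le (by linarith) 2
          simpa using h9
  have hlen' : qs - ps = r := hlen
  -- lower bound for k0
  have hk0_lb : m * r ≤ kmom K 0 x h := by
    have hsub : (∫ u in ps..qs, u ^ 0 * K u) ≤ kmom K 0 x h :=
      intervalIntegral.integral_mono_interval hps1 hps2 hps3
        (Filter.Eventually.of_forall fun u => by simpa using hnonneg u)
        (cont0.intervalIntegrable _ _)
    have hconst : (∫ u in ps..qs, m) ≤ ∫ u in ps..qs, u ^ 0 * K u := by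
      apply intervalIntegral.integral_mono_on hps2
        (_root_.intervalIntegrable_const) (cont0.intervalIntegrable _ _)
      intro u hu
      simpa using (hmem u hu).1
    rw [intervalIntegral.integral_const, smul_eq_mul, hlen] at hconst
    linarith
  have hk0_pos : 0 < kmom K 0 x h := lt_of_lt_of_le (mul_pos hm hr) hk0_lb
  -- lower bound for k2
  have hk2_lb : m * p ^ 2 * r ≤ kmom K 2 x h := by
    have hsub : (∫ u in ps..qs, u ^ 2 * K u) ≤ kmom K 2 x h :=
      intervalIntegral.integral_mono_interval hps1 hps2 hps3
        (Filter.Eventually.of_forall fun u => mul_nonneg (sq_nonneg u) (hnonneg u))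
        (cont2.intervalIntegrable _ _)
    have hconst : (∫ u in ps..qs, m * p ^ 2) ≤ ∫ u in ps..qs, u ^ 2 * K u := by
      apply intervalIntegral.integral_mono_on hps2
        (_root_.intervalIntegrable_const) (cont2.intervalIntegrable _ _)
      intro u hu
      obtain ⟨hKu, hu2⟩ := hmem u hu
      calc m * p ^ 2 = p ^ 2 * m := by ring
        _ ≤ u ^ 2 * K u := mul_le_mul hu2 hKu hm.le (sq_nonneg u)
    rw [intervalIntegral.integral_const, smul_eq_mul, hlen] at hconst
    have h9 : m * p ^ 2 * r = r * (m * p ^ 2) := by ring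
    linarith
  have hc2_pos : 0 < m * p ^ 2 * r := mul_pos (mul_pos hm (pow_pos hp 2)) hr
  -- denominator identity and lower bound
  set t : ℝ := kmom K 1 x h / kmom K 0 x h with htdef
  have contJ : Continuous fun u : ℝ => K u * (u - t) ^ 2 :=
    Kcont.mul ((continuous_id.sub continuous_const).pow 2)
  have hJid : (∫ u in (-(x / h))..((1 - x) / h), K u * (u - t) ^ 2)
      = kmom K 2 x h - 2 * t * kmom K 1 x h + t ^ 2 * kmom K 0 x h := by
    have hfun : (fun u : ℝ => K u * (u - t) ^ 2)
        = fun u : ℝ => u ^ 2 * K u - 2 * t * (u ^ 1 * K u) + t ^ 2 * (u ^ 0 * K u) := by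
      funext u; ring
    rw [hfun]
    rw [intervalIntegral.integral_add (f := fun u => u ^ 2 * K u - 2 * t * (u ^ 1 * K u))
      (g := fun u => t ^ 2 * (u ^ 0 * K u)) (((cont2).sub (continuous_const.mul cont1)).intervalIntegrable _ _)
      ((continuous_const.mul cont0).intervalIntegrable _ _)]
    rw [intervalIntegral.integral_sub (g := fun u => 2 * t * (u ^ 1 * K u)) (cont2.intervalIntegrable _ _)
      ((continuous_const.mul cont1).intervalIntegrable _ _)]
    rw [intervalIntegral.integral_const_mul, intervalIntegral.integral_const_mul]
    simp only [kmom]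
  have hJ_lb : m * (r ^ 3 / 12) ≤ ∫ u in (-(x / h))..((1 - x) / h), K u * (u - t) ^ 2 := by
    have hsub : (∫ u in ps..qs, K u * (u - t) ^ 2)
        ≤ ∫ u in (-(x / h))..((1 - x) / h), K u * (u - t) ^ 2 :=
      intervalIntegral.integral_mono_interval hps1 hps2 hps3
        (Filter.Eventually.of_forall fun u => mul_nonneg (hnonneg u) (sq_nonneg _))
        (contJ.intervalIntegrable _ _)
    have hconst : (∫ u in ps..qs, m * (u - t) ^ 2) ≤ ∫ u in ps..qs, K u * (u - t) ^ 2 := by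
      apply intervalIntegral.integral_mono_on hps2
        ((continuous_const.mul ((continuous_id.sub continuous_const).pow 2)).intervalIntegrable _ _)
        (contJ.intervalIntegrable _ _)
      intro u hu
      exact mul_le_mul_of_nonneg_right (hmem u hu).1 (sq_nonneg _)
    rw [intervalIntegral.integral_const_mul] at hconst
    have hcube := cube_lb t ps qs hps2
    rw [hlen] at hcube
    have : m * (r ^ 3 / 12) ≤ m * ∫ u in ps..qs, (u - t) ^ 2 :=
      mul_le_mul_of_nonneg_left hcube hm.le
    linarith
  have hD_id : kmom K 0 x h * kmom K 2 x h - kmom K 1 x h ^ 2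
      = kmom K 0 x h * (kmom K 2 x h - 2 * t * kmom K 1 x h + t ^ 2 * kmom K 0 x h) := by
    have h0 := hk0_pos.ne'
    rw [htdef]
    field_simp
    ring
  have hD_lb : m ^ 2 * r ^ 4 / 12 ≤ kmom K 0 x h * kmom K 2 x h - kmom K 1 x h ^ 2 := by
    rw [hD_id, ← hJid]
    calc m ^ 2 * r ^ 4 / 12 = (m * r) * (m * (r ^ 3 / 12)) := by ring
      _ ≤ kmom K 0 x h * ∫ u in (-(x / h))..((1 - x) / h), K u * (u - t) ^ 2 :=
          mul_le_mul hk0_lb hJ_lb (mul_pos hm (div_pos (pow_pos hr 3) (by norm_num))).le hk0_nonneg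
  have hcD : 0 < m ^ 2 * r ^ 4 / 12 :=
    div_pos (mul_pos (pow_pos hm 2) (pow_pos hr 4)) (by norm_num)
  have hD_pos : 0 < kmom K 0 x h * kmom K 2 x h - kmom K 1 x h ^ 2 :=
    lt_of_lt_of_le hcD hD_lb
  have hk2_le1 : kmom K 2 x h ≤ 1 := le_trans hk2_le_k0 hk0_le1
  have hD_le1 : kmom K 0 x h * kmom K 2 x h - kmom K 1 x h ^ 2 ≤ 1 := by
    have h9 : kmom K 0 x h * kmom K 2 x h ≤ 1 := mul_le_one₀ hk0_le1 hk2_nonneg hk2_le1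
    linarith [sq_nonneg (kmom K 1 x h)]
  -- rho bounds
  have hk1_le1 : kmom K 1 x h ≤ 1 := le_trans hk1_ub hk0_le1
  have hk1_gem1 : -1 ≤ kmom K 1 x h := by linarith
  have contR : Continuous fun u : ℝ =>
      K u ^ 2 * (kmom K 2 x h - kmom K 1 x h * u) ^ 2 :=
    (Kcont.pow 2).mul ((continuous_const.sub (continuous_const.mul continuous_id)).pow 2)
  have hrho_ub : krho K x h ≤ 4 * B := by
    have hpt : ∀ u : ℝ, K u ^ 2 * (kmom K 2 x h - kmom K 1 x h * u) ^ 2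
        ≤ 4 * B * (u ^ 0 * K u) := by
      intro u
      rcases le_or_gt |u| 1 with hu | hu
      · obtain ⟨hum1, hu1⟩ := abs_le.1 hu
        have h4 : (kmom K 2 x h - kmom K 1 x h * u) ^ 2 ≤ 4 := by
          have ha1 : |kmom K 2 x h| ≤ 1 := abs_le.2 ⟨by linarith, hk2_le1⟩
          have ha2 : |kmom K 1 x h * u| ≤ 1 := by
            rw [abs_mul]
            exact mul_le_one₀ (abs_le.2 ⟨hk1_gem1, hk1_le1⟩) (abs_nonneg u) hu
          have ha3 : |kmom K 2 x h - kmom K 1 x h * u| ≤ 2 := by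
            calc |kmom K 2 x h - kmom K 1 x h * u|
                ≤ |kmom K 2 x h| + |kmom K 1 x h * u| := abs_sub _ _
              _ ≤ 2 := by linarith
          calc (kmom K 2 x h - kmom K 1 x h * u) ^ 2
              = |kmom K 2 x h - kmom K 1 x h * u| ^ 2 := (sq_abs _).symm
            _ ≤ 2 ^ 2 := pow_le_pow_left₀ (abs_nonneg _) ha3 2
            _ = 4 := by norm_num
        have h5 : K u ^ 2 * (kmom K 2 x h - kmom K 1 x h * u) ^ 2 ≤ K u ^ 2 * 4 :=
          mul_le_mul_of_nonneg_left h4 (sq_nonneg _)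
        have h6 : K u ^ 2 * 4 ≤ 4 * B * K u := by
          have h9 : K u * K u ≤ B * K u := mul_le_mul_of_nonneg_right (hB u) (hnonneg u)
          have h10 : K u ^ 2 = K u * K u := sq (K u) ▸ by ring
          linarith
        simpa using le_trans h5 h6
      · simp [hsupp u hu]
    have := intervalIntegral.integral_mono_on (μ := volume) (g := fun u => 4 * B * (u ^ 0 * K u)) hab (contR.intervalIntegrable _ _)
      ((continuous_const.mul cont0).intervalIntegrable _ _) fun u _ => hpt u
    rw [intervalIntegral.integral_const_mul] at this
    have h7 : (4 * B) * kmom K 0 x h ≤ 4 * B * 1 :=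
      mul_le_mul_of_nonneg_left hk0_le1 (by linarith)
    calc krho K x h ≤ (4 * B) * kmom K 0 x h := this
      _ ≤ 4 * B := by linarith
  have hrho_lb : m ^ 2 * ((m * p ^ 2 * r) ^ 2 * r ^ 3 / 48) ≤ krho K x h := by
    have hsub : (∫ u in ps..qs, K u ^ 2 * (kmom K 2 x h - kmom K 1 x h * u) ^ 2)
        ≤ krho K x h :=
      intervalIntegral.integral_mono_interval hps1 hps2 hps3
        (Filter.Eventually.of_forall fun u => mul_nonneg (sq_nonneg _) (sq_nonneg _))
        (contR.intervalIntegrable _ _)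
    have hconst : (∫ u in ps..qs, m ^ 2 * (kmom K 2 x h - kmom K 1 x h * u) ^ 2)
        ≤ ∫ u in ps..qs, K u ^ 2 * (kmom K 2 x h - kmom K 1 x h * u) ^ 2 := by
      apply intervalIntegral.integral_mono_on hps2
        ((continuous_const.mul ((continuous_const.sub
          (continuous_const.mul continuous_id)).pow 2)).intervalIntegrable _ _)
        (contR.intervalIntegrable _ _)
      intro u hu
      exact mul_le_mul_of_nonneg_right
        (pow_le_pow_left₀ hm.le (hmem u hu).1 2) (sq_nonneg _)
    rw [intervalIntegral.integral_const_mul] at hconst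
    have hlin := linsq_lb (kmom K 2 x h) (kmom K 1 x h) ps qs (m * p ^ 2 * r)
      hpsm1 hps2 hqs1 hc2_pos hk2_lb
    rw [hlen] at hlin
    have : m ^ 2 * ((m * p ^ 2 * r) ^ 2 * r ^ 3 / 48)
        ≤ m ^ 2 * ∫ u in ps..qs, (kmom K 2 x h - kmom K 1 x h * u) ^ 2 :=
      mul_le_mul_of_nonneg_left hlin (sq_nonneg m)
    linarith
  have hcs1 : 0 < m ^ 2 * ((m * p ^ 2 * r) ^ 2 * r ^ 3 / 48) :=
    mul_pos (pow_pos hm 2)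
      (div_pos (mul_pos (pow_pos hc2_pos 2) (pow_pos hr 3)) (by norm_num))
  have hrho_nonneg : 0 ≤ krho K x h := le_trans hcs1.le hrho_lb
  -- conclude
  refine ⟨hD_pos, ?_, ?_⟩
  · have hD2_le1 : (kmom K 0 x h * kmom K 2 x h - kmom K 1 x h ^ 2) ^ 2 ≤ 1 :=
      pow_le_one₀ hD_pos.le hD_le1
    have hD2_pos : 0 < (kmom K 0 x h * kmom K 2 x h - kmom K 1 x h ^ 2) ^ 2 :=
      pow_pos hD_pos 2
    have hge : krho K x h ≤ kscale K x h := by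
      rw [kscale, le_div_iff₀ hD2_pos]
      calc krho K x h * (kmom K 0 x h * kmom K 2 x h - kmom K 1 x h ^ 2) ^ 2
          ≤ krho K x h * 1 := mul_le_mul_of_nonneg_left hD2_le1 hrho_nonneg
        _ = krho K x h := mul_one _
    calc min (m ^ 2 * ((m * p ^ 2 * r) ^ 2 * r ^ 3 / 48)) (4 * B / (m ^ 2 * r ^ 4 / 12) ^ 2)
        ≤ m ^ 2 * ((m * p ^ 2 * r) ^ 2 * r ^ 3 / 48) := min_le_left _ _
      _ ≤ krho K x h := hrho_lb
      _ ≤ kscale K x h := hge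
  · rw [kscale]
    apply div_le_div₀ (by linarith) hrho_ub (pow_pos hcD 2)
    exact pow_le_pow_left₀ hcD.le hD_lb 2
end

section
/- Consistency of the thresholded dendrogram estimator with a possibly growing number of groups (probabilistic master version covering Theorem 2 and its Section 8.3 extension): For each T ∈ ℕ, let K₀(T) ≥ 1 and n(T) ≥ K₀(T) be integers, let {G₁^{(T)},…,G_{K₀(T)}^{(T)}} be a partition of {1,…,n(T)} into K₀(T) nonempty groups, let d̂^{(T)} be a random symmetric real array on {1,…,n(T)}² with probability measure P_T, and let π_T be a deterministic real sequence. If P_T( max_{1≤k≤K₀(T)} max_{i,j∈G_k^{(T)}, i≠j} d̂^{(T)}_{ij} ≤ π_T and min_{1≤k<k′≤K₀(T)} min_{i∈G_k^{(T)}, j∈G_{k′}^{(T)}} d̂^{(T)}_{ij} > π_T ) → 1 as T → ∞ (the between-group condition being vacuous when K₀(T) = 1), then P_T( K̂₀(d̂^{(T)}, π_T) = K₀(T) ) → 1 as T → ∞. -/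
open Finset

/-- Complete-linkage dissimilarity `Δ(S,S') = max_{i ∈ S, j ∈ S'} d i j`, as an
extended real (so that the value over an empty index set is `⊥`). -/
noncomputable def cLink {n : ℕ} (d : Fin n → Fin n → ℝ) (S S' : Finset (Fin n)) : EReal :=
  sSup {x : EReal | ∃ i ∈ S, ∃ j ∈ S', x = (d i j : EReal)}

/-- Within-cluster dissimilarity `Δ(C) = max_{i,j ∈ C, i ≠ j} d i j`, as an extended real;
for a singleton (or empty) cluster the value is `⊥`, which is smaller than every real. -/
noncomputable def cDiam {n : ℕ} (d : Fin n → Fin n → ℝ) (C : Finset (Fin n)) : EReal :=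
  sSup {x : EReal | ∃ i ∈ C, ∃ j ∈ C, i ≠ j ∧ x = (d i j : EReal)}

/-- The initial partition of `{1,…,n}` into `n` singleton clusters. -/
def singletonPartition (n : ℕ) : Finset (Finset (Fin n)) :=
  Finset.univ.image fun i : Fin n => ({i} : Finset (Fin n))

/-- `Q` is obtained from `P` by merging one pair of distinct clusters attaining the
minimum of the complete-linkage dissimilarity `Δ` over all pairs of distinct clusters. -/
def IsMergeStep {n : ℕ} (d : Fin n → Fin n → ℝ) (P Q : Finset (Finset (Fin n))) : Prop :=
  ∃ C ∈ P, ∃ C' ∈ P, C ≠ C' ∧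
    (∀ D ∈ P, ∀ D' ∈ P, D ≠ D' → cLink d C C' ≤ cLink d D D') ∧
    Q = insert (C ∪ C') ((P.erase C).erase C')

/-- A run of the complete-linkage HAC algorithm (with an arbitrary choice of
tie-breaking at each step): `P 0` is the singleton partition and for every
`r < n - 1`, `P (r+1)` is obtained from `P r` by a merge step. -/
def IsHACChain {n : ℕ} (d : Fin n → Fin n → ℝ) (P : ℕ → Finset (Finset (Fin n))) : Prop :=
  P 0 = singletonPartition n ∧ ∀ r, r < n - 1 → IsMergeStep d (P r) (P (r + 1))

/-- `G` is a partition of `{1,…,n}` into `K₀` nonempty groups. -/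
def IsGroupPartition {n K₀ : ℕ} (G : Fin K₀ → Finset (Fin n)) : Prop :=
  (∀ k, (G k).Nonempty) ∧ (∀ i : Fin n, ∃ k, i ∈ G k) ∧
    ∀ k k' : Fin K₀, k ≠ k' → Disjoint (G k) (G k')

/-- The partition `G` is `d`-separated: every within-group distance is strictly smaller
than every between-group distance (vacuously true when `K₀ = 1`). -/
def IsSeparated {n K₀ : ℕ} (d : Fin n → Fin n → ℝ) (G : Fin K₀ → Finset (Fin n)) : Prop :=
  ∀ k : Fin K₀, ∀ i ∈ G k, ∀ j ∈ G k, i ≠ j →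
    ∀ k₁ k₂ : Fin K₀, k₁ ≠ k₂ → ∀ a ∈ G k₁, ∀ b ∈ G k₂, d i j < d a b

/-- `A` is a refinement of `B`: every element of `A` is a subset of some element of `B`. -/
def IsRefinement {n : ℕ} (A B : Finset (Finset (Fin n))) : Prop :=
  ∀ C ∈ A, ∃ D ∈ B, C ⊆ D

/-- The thresholded dendrogram estimator of the number of groups:
`K̂₀(d,π) = min { K ∈ {1,…,n} : every cluster of the HAC partition into K clusters has
within-cluster dissimilarity at most π }`. -/
noncomputable def Khat {n : ℕ} (d : Fin n → Fin n → ℝ)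
    (P : ℕ → Finset (Finset (Fin n))) (π : ℝ) : ℕ :=
  sInf {K : ℕ | 1 ≤ K ∧ K ≤ n ∧ ∀ C ∈ P (n - K), cDiam d C ≤ (π : EReal)}


open MeasureTheory Filter

lemma cLink_le_coe {n : ℕ} {d : Fin n → Fin n → ℝ} {S S' : Finset (Fin n)} {π : ℝ}
    (h : ∀ i ∈ S, ∀ j ∈ S', d i j ≤ π) : cLink d S S' ≤ (π : EReal) := by
  apply sSup_le
  rintro x ⟨i, hi, j, hj, rfl⟩
  exact_mod_cast h i hi j hj

lemma coe_le_cLink {n : ℕ} {d : Fin n → Fin n → ℝ} {S S' : Finset (Fin n)} {i j : Fin n}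
    (hi : i ∈ S) (hj : j ∈ S') : (d i j : EReal) ≤ cLink d S S' :=
  le_sSup ⟨i, hi, j, hj, rfl⟩

lemma cDiam_le_coe {n : ℕ} {d : Fin n → Fin n → ℝ} {C : Finset (Fin n)} {π : ℝ}
    (h : ∀ i ∈ C, ∀ j ∈ C, i ≠ j → d i j ≤ π) : cDiam d C ≤ (π : EReal) := by
  apply sSup_le
  rintro x ⟨i, hi, j, hj, hij, rfl⟩
  exact_mod_cast h i hi j hj hij

lemma coe_le_cDiam {n : ℕ} {d : Fin n → Fin n → ℝ} {C : Finset (Fin n)} {i j : Fin n}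
    (hi : i ∈ C) (hj : j ∈ C) (hij : i ≠ j) : (d i j : EReal) ≤ cDiam d C :=
  le_sSup ⟨i, hi, j, hj, hij, rfl⟩

/-- Auxiliary invariant: `P` is a partition of `Fin n` into nonempty clusters. -/
def IsPart {n : ℕ} (P : Finset (Finset (Fin n))) : Prop :=
  (∀ C ∈ P, C.Nonempty) ∧ (∀ i : Fin n, ∃ C ∈ P, i ∈ C) ∧
    ∀ C ∈ P, ∀ C' ∈ P, C ≠ C' → Disjoint C C'

lemma singletonPartition_isPart (n : ℕ) : IsPart (singletonPartition n) := by
  refine ⟨?_, ?_, ?_⟩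
  · intro C hC
    obtain ⟨i, -, rfl⟩ := Finset.mem_image.mp hC
    exact ⟨i, Finset.mem_singleton_self i⟩
  · intro i
    exact ⟨{i}, Finset.mem_image.mpr ⟨i, Finset.mem_univ i, rfl⟩, Finset.mem_singleton_self i⟩
  · intro C hC C' hC' hne
    obtain ⟨i, -, rfl⟩ := Finset.mem_image.mp hC
    obtain ⟨j, -, rfl⟩ := Finset.mem_image.mp hC'
    have : i ≠ j := fun h => hne (by rw [h])
    simp [Finset.disjoint_singleton, this, this.symm]

lemma singletonPartition_card (n : ℕ) : (singletonPartition n).card = n := by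
  rw [singletonPartition, Finset.card_image_of_injective _ Finset.singleton_injective]
  simp

lemma mergeStep_invariant {n : ℕ} {d : Fin n → Fin n → ℝ} {P Q : Finset (Finset (Fin n))}
    (hP : IsPart P) (h : IsMergeStep d P Q) : IsPart Q ∧ Q.card + 1 = P.card := by
  obtain ⟨C, hC, C', hC', hne, -, rfl⟩ := h
  have hC'e : C' ∈ P.erase C := Finset.mem_erase.mpr ⟨fun h => hne h.symm, hC'⟩
  have hsubP : ∀ D ∈ (P.erase C).erase C', D ∈ P ∧ D ≠ C ∧ D ≠ C' := by
    intro D hD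
    have h1 := Finset.mem_erase.mp hD
    have h2 := Finset.mem_erase.mp h1.2
    exact ⟨h2.2, h2.1, h1.1⟩
  have hnotmem : C ∪ C' ∉ (P.erase C).erase C' := by
    intro hmem
    obtain ⟨hmemP, hneC, -⟩ := hsubP _ hmem
    have hdisj := hP.2.2 C hC (C ∪ C') hmemP (fun h => hneC h.symm)
    obtain ⟨i, hi⟩ := hP.1 C hC
    exact Finset.disjoint_left.mp hdisj hi (Finset.mem_union_left _ hi)
  constructor
  · refine ⟨?_, ?_, ?_⟩
    · intro D hD
      rcases Finset.mem_insert.mp hD with rfl | hD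
      · obtain ⟨i, hi⟩ := hP.1 C hC
        exact ⟨i, Finset.mem_union_left _ hi⟩
      · exact hP.1 D (hsubP _ hD).1
    · intro i
      obtain ⟨D, hD, hiD⟩ := hP.2.1 i
      by_cases hDC : D = C
      · exact ⟨C ∪ C', Finset.mem_insert_self _ _, Finset.mem_union_left _ (hDC ▸ hiD)⟩
      by_cases hDC' : D = C'
      · exact ⟨C ∪ C', Finset.mem_insert_self _ _, Finset.mem_union_right _ (hDC' ▸ hiD)⟩
      · exact ⟨D, Finset.mem_insert_of_mem
          (Finset.mem_erase.mpr ⟨hDC', Finset.mem_erase.mpr ⟨hDC, hD⟩⟩), hiD⟩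
    · intro D hD D' hD' hDD'
      rcases Finset.mem_insert.mp hD with rfl | hD <;>
        rcases Finset.mem_insert.mp hD' with rfl | hD'
      · exact absurd rfl hDD'
      · obtain ⟨hm, h1, h2⟩ := hsubP _ hD'
        exact Finset.disjoint_union_left.mpr
          ⟨hP.2.2 C hC D' hm (fun h => h1 h.symm), hP.2.2 C' hC' D' hm (fun h => h2 h.symm)⟩
      · obtain ⟨hm, h1, h2⟩ := hsubP _ hD
        exact (Finset.disjoint_union_left.mpr
          ⟨hP.2.2 C hC D hm (fun h => h1 h.symm), hP.2.2 C' hC' D hm (fun h => h2 h.symm)⟩).symm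
      · exact hP.2.2 D (hsubP _ hD).1 D' (hsubP _ hD').1 hDD'
  · have h2le : 2 ≤ P.card := by
      have : 1 < P.card := Finset.one_lt_card.mpr ⟨C, hC, C', hC', hne⟩
      omega
    rw [Finset.card_insert_of_notMem hnotmem, Finset.card_erase_of_mem hC'e,
      Finset.card_erase_of_mem hC]
    omega

/-- Deterministic core: under separation by the threshold `π`, any complete-linkage
HAC chain yields `Khat = K₀`. -/
theorem khat_det {n K₀ : ℕ} (hK : 1 ≤ K₀) (hn : K₀ ≤ n)
    (d : Fin n → Fin n → ℝ) (G : Fin K₀ → Finset (Fin n)) (hG : IsGroupPartition G)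
    (π : ℝ)
    (hin : ∀ k, ∀ i ∈ G k, ∀ j ∈ G k, i ≠ j → d i j ≤ π)
    (hout : ∀ k k' : Fin K₀, k ≠ k' → ∀ i ∈ G k, ∀ j ∈ G k', π < d i j)
    (Q : ℕ → Finset (Finset (Fin n))) (hQ : IsHACChain d Q) :
    Khat d Q π = K₀ := by
  -- partition invariant with cardinality
  have inv : ∀ r, r ≤ n - 1 → IsPart (Q r) ∧ (Q r).card = n - r := by
    intro r
    induction r with
    | zero =>
      intro _
      rw [hQ.1]
      exact ⟨singletonPartition_isPart n, by simp [singletonPartition_card]⟩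
    | succ r ih =>
      intro hr
      obtain ⟨hpart, hcard⟩ := ih (by omega)
      obtain ⟨hpart', hcard'⟩ := mergeStep_invariant hpart (hQ.2 r (by omega))
      exact ⟨hpart', by omega⟩
  -- refinement invariant
  have refine : ∀ r, r ≤ n - K₀ → ∀ C ∈ Q r, ∃ k, C ⊆ G k := by
    intro r
    induction r with
    | zero =>
      intro _ C hC
      rw [hQ.1] at hC
      obtain ⟨i, -, rfl⟩ := Finset.mem_image.mp hC
      obtain ⟨k, hk⟩ := hG.2.1 i
      exact ⟨k, Finset.singleton_subset_iff.mpr hk⟩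
    | succ r ih =>
      intro hr
      have hrK : r < n - K₀ := by omega
      have hrn : r < n - 1 := by omega
      have ihr := ih (by omega)
      obtain ⟨hpart, hcard⟩ := inv r (by omega)
      obtain ⟨C, hC, C', hC', hne, hmin, hQeq⟩ := hQ.2 r hrn
      -- pigeonhole: two clusters in the same group
      have hKlt : K₀ < (Q r).card := by omega
      set f : Finset (Fin n) → Fin K₀ := fun C =>
        if h : ∃ k, C ⊆ G k then h.choose else ⟨0, hK⟩ with hf
      obtain ⟨D, hD, D', hD', hDD', hfeq⟩ :=
        Finset.exists_ne_map_eq_of_card_lt_of_maps_to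
          (t := (Finset.univ : Finset (Fin K₀)))
          (by simpa using hKlt) (fun C _ => Finset.mem_univ (f C))
      have hDsub : D ⊆ G (f D) := by
        have hex : ∃ k, D ⊆ G k := ihr D hD
        simp only [hf, dif_pos hex]
        exact hex.choose_spec
      have hD'sub : D' ⊆ G (f D) := by
        have hex : ∃ k, D' ⊆ G k := ihr D' hD'
        rw [hfeq]
        simp only [hf, dif_pos hex]
        exact hex.choose_spec
      have hlinkDD' : cLink d D D' ≤ (π : EReal) := by
        apply cLink_le_coe
        intro i hi j hj
        have hij : i ≠ j := by
          intro h
          exact Finset.disjoint_left.mp (hpart.2.2 D hD D' hD' hDD') hi (h ▸ hj)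
        exact hin (f D) i (hDsub hi) j (hD'sub hj) hij
      obtain ⟨k, hk⟩ := ihr C hC
      obtain ⟨k', hk'⟩ := ihr C' hC'
      have hkk' : k = k' := by
        by_contra hkne
        obtain ⟨i, hi⟩ := hpart.1 C hC
        obtain ⟨j, hj⟩ := hpart.1 C' hC'
        have h1 : (π : EReal) < (d i j : EReal) :=
          EReal.coe_lt_coe_iff.mpr (hout k k' hkne i (hk hi) j (hk' hj))
        have h2 : (d i j : EReal) ≤ cLink d C C' := coe_le_cLink hi hj
        have h3 := hmin D hD D' hD' hDD'
        exact absurd ((h1.trans_le h2).trans_le (h3.trans hlinkDD')) (lt_irrefl _)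
      intro E hE
      rw [hQeq] at hE
      rcases Finset.mem_insert.mp hE with rfl | hE
      · exact ⟨k, Finset.union_subset hk (hkk' ▸ hk')⟩
      · exact ihr E (Finset.mem_erase.mp (Finset.mem_erase.mp hE).2).2
  -- K₀ belongs to the defining set
  have hK₀mem : K₀ ∈ {K : ℕ | 1 ≤ K ∧ K ≤ n ∧ ∀ C ∈ Q (n - K), cDiam d C ≤ (π : EReal)} := by
    refine ⟨hK, hn, ?_⟩
    intro C hC
    obtain ⟨k, hk⟩ := refine (n - K₀) le_rfl C hC
    apply cDiam_le_coe
    intro i hi j hj hij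
    exact hin k i (hk hi) j (hk hj) hij
  -- every element of the set is ≥ K₀
  have hlb : ∀ K ∈ {K : ℕ | 1 ≤ K ∧ K ≤ n ∧ ∀ C ∈ Q (n - K), cDiam d C ≤ (π : EReal)},
      K₀ ≤ K := by
    rintro K ⟨hK1, hKn, hKdiam⟩
    by_contra hlt
    push_neg at hlt
    obtain ⟨hpart, hcard⟩ := inv (n - K) (by omega)
    have hcardK : (Q (n - K)).card = K := by omega
    -- pigeonhole: two group representatives in the same cluster
    have ha : ∀ k : Fin K₀, ∃ i, i ∈ G k := fun k => hG.1 k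
    set a : Fin K₀ → Fin n := fun k => (ha k).choose with hadef
    have haG : ∀ k, a k ∈ G k := fun k => (ha k).choose_spec
    have hcl : ∀ k : Fin K₀, ∃ C ∈ Q (n - K), a k ∈ C := fun k => hpart.2.1 (a k)
    set g : Fin K₀ → Finset (Fin n) := fun k => (hcl k).choose with hg
    have hgmem : ∀ k, g k ∈ Q (n - K) ∧ a k ∈ g k := fun k => by
      obtain ⟨h1, h2⟩ := (hcl k).choose_spec
      exact ⟨h1, h2⟩
    obtain ⟨k, -, k', -, hkne, hgeq⟩ :=
      Finset.exists_ne_map_eq_of_card_lt_of_maps_to (s := (Finset.univ : Finset (Fin K₀)))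
        (t := Q (n - K)) (by simpa [hcardK] using hlt) (fun k _ => (hgmem k).1)
    have hane : a k ≠ a k' := by
      intro h
      exact Finset.disjoint_left.mp (hG.2.2 k k' hkne) (haG k) (h ▸ haG k')
    have h1 : (π : EReal) < (d (a k) (a k') : EReal) :=
      EReal.coe_lt_coe_iff.mpr (hout k k' hkne (a k) (haG k) (a k') (haG k'))
    have h2 : (d (a k) (a k') : EReal) ≤ cDiam d (g k) :=
      coe_le_cDiam (hgmem k).2 (hgeq ▸ (hgmem k').2) hane
    have h3 := hKdiam (g k) (hgmem k).1
    exact absurd ((h1.trans_le h2).trans_le h3) (lt_irrefl _)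
  exact Nat.le_antisymm (Nat.sInf_le hK₀mem)
    (hlb _ (Nat.sInf_mem (Set.nonempty_of_mem hK₀mem)))


/-- **Consistency of the thresholded dendrogram estimator with a possibly growing number
of groups (master version covering Theorem 2 and its Section 8.3 extension).** If, with
probability tending to one, the threshold `π_T` lies weakly above every within-group
distance and strictly below every between-group distance (the latter being vacuous when
`K₀(T) = 1`), then `P_T(K̂₀(d̂⁽ᵀ⁾, π_T) = K₀(T)) → 1`, for every run (tie-breaking) of
the complete-linkage HAC algorithm. -/
theorem khat_consistency_growing_K0
    (n K₀ : ℕ → ℕ) (hK₀ : ∀ T, 1 ≤ K₀ T) (hn : ∀ T, K₀ T ≤ n T)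
    (Ω : ℕ → Type*) [∀ T, MeasurableSpace (Ω T)]
    (μ : ∀ T, Measure (Ω T)) [∀ T, IsProbabilityMeasure (μ T)]
    (dh : ∀ T, Ω T → Fin (n T) → Fin (n T) → ℝ)
    (hsym : ∀ T ω i j, dh T ω i j = dh T ω j i)
    (G : ∀ T, Fin (K₀ T) → Finset (Fin (n T)))
    (hG : ∀ T, IsGroupPartition (G T))
    (π : ℕ → ℝ)
    (hsep : Tendsto
      (fun T => μ T {ω |
        (∀ k, ∀ i ∈ G T k, ∀ j ∈ G T k, i ≠ j → dh T ω i j ≤ π T) ∧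
          ∀ k k' : Fin (K₀ T), k ≠ k' →
            ∀ i ∈ G T k, ∀ j ∈ G T k', π T < dh T ω i j})
      atTop (nhds (1 : ENNReal))) :
    Tendsto
      (fun T => μ T {ω | ∀ Q, IsHACChain (dh T ω) Q → Khat (dh T ω) Q (π T) = K₀ T})
      atTop (nhds (1 : ENNReal)) := by
  refine tendsto_of_tendsto_of_tendsto_of_le_of_le hsep tendsto_const_nhds ?_ ?_
  · intro T
    apply measure_mono
    rintro ω ⟨hin, hout⟩ Q hQ
    exact khat_det (hK₀ T) (hn T) (dh T ω) (G T) (hG T) (π T) hin hout Q hQ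
  · intro T
    exact prob_le_one
end
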